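/- There exists a linear code over F_q with locality r, length n with (r+1) | n, and distance d = n - ⌈k/r⌉ - k + 2, provided q > C(n, k + ⌈k/r⌉ - 1). -/

import Mathlib

open MvPolynomial

lemma mv_aux {F : Type*} [Field F] [Fintype F] {N : ℕ} (P : MvPolynomial (Fin N) F) (hP : P ≠ 0)
    (hdeg : ∀ i, P.degreeOf i < Fintype.card F) : ∃ x, MvPolynomial.eval x P ≠ 0 := by
  induction N with
  | zero =>
    obtain ⟨c, rfl⟩ := MvPolynomial.C_surjective (Fin 0) P
    refine ⟨0, ?_⟩
    simp only [eval_C]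
    intro h; exact hP (by rw [h, map_zero])
  | succ N IH =>
    set Φ := MvPolynomial.finSuccEquiv F N P with hΦ
    have hΦ0 : Φ ≠ 0 := fun h => hP ((map_eq_zero_iff _ (AlgEquiv.injective _)).mp h)
    obtain ⟨i, hi⟩ : ∃ i, Φ.coeff i ≠ 0 := by
      by_contra hc
      push_neg at hc
      exact hΦ0 (Polynomial.ext fun i => by simpa using hc i)
    obtain ⟨x, hx⟩ := IH (Φ.coeff i) hi
      (fun j => lt_of_le_of_lt (degreeOf_coeff_finSuccEquiv P j i) (hdeg j.succ))
    set φ := Polynomial.map (MvPolynomial.eval x) Φ with hφ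
    have hφ0 : φ ≠ 0 := fun h => hx (by
      have := congrArg (fun q => Polynomial.coeff q i) h
      simpa [hφ, Polynomial.coeff_map] using this)
    have hφd : φ.natDegree < Fintype.card F := by
      refine lt_of_le_of_lt Polynomial.natDegree_map_le ?_
      rw [hΦ, natDegree_finSuccEquiv]
      exact hdeg 0
    obtain ⟨y, hy⟩ := Polynomial.exists_eval_ne_zero_of_natDegree_lt_card φ hφ0
      (by rw [Cardinal.mk_fintype]; exact_mod_cast hφd)
    exact ⟨Fin.cons y x, by rwa [eval_eq_eval_mv_eval']⟩

lemma mv_exists {F : Type*} [Field F] [Fintype F] {σ : Type*} [Fintype σ]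
    (P : MvPolynomial σ F) (hP : P ≠ 0)
    (hdeg : ∀ i, P.degreeOf i < Fintype.card F) : ∃ x, MvPolynomial.eval x P ≠ 0 := by
  classical
  let e := Fintype.equivFin σ
  obtain ⟨x, hx⟩ := mv_aux (MvPolynomial.rename e P)
    (fun h => hP ((MvPolynomial.rename_injective _ e.injective) (by simpa using h)))
    (fun i => by
      rw [show i = e (e.symm i) by simp, MvPolynomial.degreeOf_rename_of_injective e.injective]
      exact hdeg _)
  exact ⟨x ∘ e, by rwa [MvPolynomial.eval_rename] at hx⟩

lemma degreeOf_sum_le' {R σ A : Type*} [CommRing R] (v : σ) (S : Finset A)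
    (f : A → MvPolynomial σ R) (b : ℕ) (h : ∀ a ∈ S, MvPolynomial.degreeOf v (f a) ≤ b) :
    MvPolynomial.degreeOf v (∑ a ∈ S, f a) ≤ b := by
  induction S using Finset.cons_induction with
  | empty => simp
  | cons a S ha IH =>
    rw [Finset.sum_cons]
    exact le_trans (MvPolynomial.degreeOf_add_le _ _ _)
      (max_le (h a (Finset.mem_cons_self _ _)) (IH fun x hx => h x (Finset.mem_cons.2 (Or.inr hx))))

lemma degreeOf_prod_le' {R σ A : Type*} [CommRing R] (v : σ) (S : Finset A)
    (f : A → MvPolynomial σ R) (b : A → ℕ) (h : ∀ a ∈ S, MvPolynomial.degreeOf v (f a) ≤ b a) :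
    MvPolynomial.degreeOf v (∏ a ∈ S, f a) ≤ ∑ a ∈ S, b a := by
  induction S using Finset.cons_induction with
  | empty =>
    rw [Finset.prod_empty, Finset.sum_empty]
    exact le_of_eq (by rw [← MvPolynomial.C_1]; exact MvPolynomial.degreeOf_C _ _)
  | cons a S ha IH =>
    rw [Finset.prod_cons, Finset.sum_cons]
    exact le_trans (MvPolynomial.degreeOf_mul_le _ _ _)
      (add_le_add (h a (Finset.mem_cons_self _ _)) (IH fun x hx => h x (Finset.mem_cons.2 (Or.inr hx))))

noncomputable def pcol (F : Type*) [Field F] (k r g : ℕ) (β : Fin g × Fin (r+1)) (a : Fin k) :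
    MvPolynomial (Fin k × Fin g × Fin r) F :=
  if h : (β.2 : ℕ) < r then MvPolynomial.X (a, β.1, ⟨(β.2 : ℕ), h⟩)
  else -(∑ u : Fin r, MvPolynomial.X (a, β.1, u))

lemma pcol_castSucc (F : Type*) [Field F] (k r g : ℕ) (j : Fin g) (u : Fin r) (a : Fin k) :
    pcol F k r g (j, u.castSucc) a = MvPolynomial.X (a, j, u) := by
  rw [pcol, dif_pos (by simpa using u.isLt)]
  congr 1

lemma pcol_last (F : Type*) [Field F] (k r g : ℕ) (j : Fin g) (a : Fin k) :
    pcol F k r g (j, Fin.last r) a = -(∑ u : Fin r, MvPolynomial.X (a, j, u)) := by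
  rw [pcol, dif_neg (by simp)]

lemma pcol_sum (F : Type*) [Field F] (k r g : ℕ) (j : Fin g) (a : Fin k) :
    ∑ t : Fin (r+1), pcol F k r g (j, t) a = 0 := by
  rw [Fin.sum_univ_castSucc, pcol_last]
  simp [pcol_castSucc]

lemma degreeOf_pcol (F : Type*) [Field F] (k r g : ℕ) (v : Fin k × Fin g × Fin r)
    (β : Fin g × Fin (r+1)) (a : Fin k) :
    MvPolynomial.degreeOf v (pcol F k r g β a) ≤ if v.1 = a then 1 else 0 := by
  have hX : ∀ w : Fin k × Fin g × Fin r, w.1 = a →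
      MvPolynomial.degreeOf v (MvPolynomial.X w : MvPolynomial _ F) ≤ if v.1 = a then 1 else 0 := by
    intro w hw
    rw [MvPolynomial.degreeOf_X]
    split_ifs with h1 h2 h2 <;> simp_all
  by_cases h : (β.2 : ℕ) < r
  · rw [pcol, dif_pos h]
    exact hX (a, β.1, ⟨(β.2 : ℕ), h⟩) rfl
  · rw [pcol, dif_neg h, MvPolynomial.degreeOf_neg]
    exact degreeOf_sum_le' _ _ _ _ (fun u _ => hX (a, β.1, u) rfl)

section
variable (F : Type*) [Field F] (k r g : ℕ)

noncomputable def Qd (B : Finset (Fin g × Fin (r+1))) :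
    MvPolynomial (Fin k × Fin g × Fin r) F :=
  if h : B.card = k then
    Matrix.det (Matrix.of fun a c : Fin k =>
      pcol F k r g (((B.equivFin.trans (finCongr h)).symm c : B) : Fin g × Fin (r+1)) a)
  else 1

variable {F k r g}

lemma Qd_ne_zero {B : Finset (Fin g × Fin (r+1))} (hB : B.card = k)
    (hmiss : ∀ j : Fin g, ∃ u : Fin (r+1), (j, u) ∉ B) : Qd F k r g B ≠ 0 := by
  classical
  set ε : B ≃ Fin k := B.equivFin.trans (finCongr hB) with hε
  set w : Fin g → Fin (r+1) := fun j => (hmiss j).choose with hw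
  have hwB : ∀ j, (j, w j) ∉ B := fun j => (hmiss j).choose_spec
  set tv : Fin g × Fin (r+1) → Fin k → F :=
    fun β => if h : β ∈ B then Pi.single (ε ⟨β, h⟩) (1:F) else 0 with htv
  set y : Fin k × Fin g × Fin r → F := fun v =>
    if v.2.2.castSucc = w v.2.1 then -(∑ t : Fin (r+1), tv (v.2.1, t) v.1)
    else tv (v.2.1, v.2.2.castSucc) v.1 with hy
  have heval : ∀ β ∈ B, ∀ a, MvPolynomial.eval y (pcol F k r g β a) = tv β a := by
    rintro ⟨j, t⟩ hβ a
    by_cases h : (t : ℕ) < r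
    · have hcs : (⟨(t : ℕ), h⟩ : Fin r).castSucc = t := by ext; simp
      rw [pcol, dif_pos h, MvPolynomial.eval_X]
      have hne : (⟨(t : ℕ), h⟩ : Fin r).castSucc ≠ w j := by
        rw [hcs]; rintro rfl; exact hwB j hβ
      simp only [hy, if_neg hne, hcs]
    · have ht : t = Fin.last r := by
        ext
        have := t.isLt
        simp only [Fin.val_last]
        omega
      subst ht
      have hwne : w j ≠ Fin.last r := fun hwl => hwB j (by rw [hwl]; exact hβ)
      have hwlt : ((w j : Fin (r+1)) : ℕ) < r := by
        have h1 := (w j).isLt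
        have h2 : ((w j : Fin (r+1)) : ℕ) ≠ r := fun hc => hwne (by ext; simp [hc])
        omega
      set u₀ : Fin r := ⟨((w j : Fin (r+1)) : ℕ), hwlt⟩ with hu₀
      have hcs0 : u₀.castSucc = w j := by ext; simp [hu₀]
      rw [pcol, dif_neg h, map_neg, map_sum]
      simp only [MvPolynomial.eval_X]
      have hyu : ∀ u : Fin r, u ≠ u₀ → y (a, j, u) = tv (j, u.castSucc) a := by
        intro u hu
        have hne : u.castSucc ≠ w j := by
          rw [← hcs0]; exact fun hc => hu (Fin.castSucc_injective _ hc)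
        simp only [hy, if_neg hne]
      have hyu₀ : y (a, j, u₀) = -(∑ t : Fin (r+1), tv (j, t) a) := by
        simp only [hy, if_pos hcs0]
      rw [← Finset.add_sum_erase _ _ (Finset.mem_univ u₀), hyu₀,
        Finset.sum_congr rfl (fun u hu => hyu u (Finset.ne_of_mem_erase hu)),
        Finset.sum_erase_eq_sub (Finset.mem_univ u₀)]
      have h1 : ∑ u : Fin r, tv (j, u.castSucc) a
          = (∑ t : Fin (r+1), tv (j, t) a) - tv (j, Fin.last r) a := by
        rw [Fin.sum_univ_castSucc (f := fun t => tv (j, t) a)]; ring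
      have h2 : tv (j, u₀.castSucc) a = 0 := by
        rw [hcs0]
        simp only [htv, dif_neg (hwB j), Pi.zero_apply]
      rw [h1, h2]
      ring
  intro h0
  have h1 := congrArg (MvPolynomial.eval y) h0
  rw [map_zero] at h1
  apply one_ne_zero (α := F)
  rw [← h1, Qd, dif_pos hB, ← hε, RingHom.map_det]
  have hM : (Matrix.of fun a c : Fin k =>
      pcol F k r g ((ε.symm c : B) : Fin g × Fin (r+1)) a).map (MvPolynomial.eval y)
      = (1 : Matrix (Fin k) (Fin k) F) := by
    ext a c
    rw [Matrix.map_apply, Matrix.of_apply, heval _ (Subtype.mem _) a]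
    simp only [htv, Subtype.coe_eta, Equiv.apply_symm_apply]
    split_ifs with hmem
    · rw [Pi.single_apply, Matrix.one_apply]
    · exact absurd (ε.symm c).2 hmem
  rw [RingHom.mapMatrix_apply, hM, Matrix.det_one]

lemma degreeOf_Qd_le (v : Fin k × Fin g × Fin r) (B : Finset (Fin g × Fin (r+1))) :
    MvPolynomial.degreeOf v (Qd F k r g B) ≤ 1 := by
  rw [Qd]
  split_ifs with h
  · rw [Matrix.det_apply]
    refine degreeOf_sum_le' _ _ _ _ (fun τ _ => ?_)
    have hprod : MvPolynomial.degreeOf v (∏ c : Fin k,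
        (Matrix.of fun a c : Fin k =>
          pcol F k r g (((B.equivFin.trans (finCongr h)).symm c : B) : Fin g × Fin (r+1)) a)
          (τ c) c) ≤ 1 := by
      refine le_trans (degreeOf_prod_le' v _ _ (fun c => if v.1 = τ c then 1 else 0)
        (fun c _ => degreeOf_pcol F k r g v _ _)) (le_of_eq ?_)
      simp only [← Equiv.symm_apply_eq]
      rw [Finset.sum_ite_eq _ (τ.symm v.1) (fun _ => (1:ℕ))]
      simp
    rcases Int.units_eq_one_or (Equiv.Perm.sign τ) with hs | hs
    · rwa [hs, one_smul]
    · rw [hs, Units.neg_smul, one_smul, MvPolynomial.degreeOf_neg]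
      exact hprod
  · refine le_trans (le_of_eq ?_) (Nat.zero_le 1)
    rw [← MvPolynomial.C_1]
    exact MvPolynomial.degreeOf_C _ _

lemma nat_ceil_facts {k r : ℕ} (hk : 0 < k) (hr : 0 < r) :
    1 ≤ (k + r - 1) / r ∧ k ≤ ((k + r - 1) / r) * r ∧ ((k + r - 1) / r) * r ≤ k + r - 1 := by
  refine ⟨(Nat.one_le_div_iff hr).mpr (by omega), ?_, Nat.div_mul_le_self _ _⟩
  have h1 : k + r - 1 < ((k + r - 1) / r + 1) * r :=
    (Nat.div_lt_iff_lt_mul hr).mp (Nat.lt_succ_self _)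
  rw [Nat.succ_mul] at h1
  omega

lemma ceil_eq_nat_div {k r : ℕ} (hk : 0 < k) (hr : 0 < r) :
    ⌈(k : ℚ) / (r : ℚ)⌉ = (((k + r - 1) / r : ℕ) : ℤ) := by
  obtain ⟨hs1, h1, h2⟩ := nat_ceil_facts hk hr
  have hrq : (0 : ℚ) < (r : ℚ) := by exact_mod_cast hr
  set s := (k + r - 1) / r with hs
  rw [Int.ceil_eq_iff]
  constructor
  · have hn : s * r + 1 ≤ k + r := by omega
    have hq : (s : ℚ) * r + 1 ≤ (k : ℚ) + r := by exact_mod_cast hn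
    push_cast
    rw [lt_div_iff₀ hrq, sub_mul, one_mul]
    linarith
  · have hq : (k : ℚ) ≤ (s : ℚ) * r := by exact_mod_cast h1
    push_cast
    rw [div_le_iff₀ hrq]
    exact hq

lemma exists_B {k r g : ℕ} (hk : 0 < k) (hr : 0 < r)
    (C : Finset (Fin g × Fin (r+1))) (hC : C.card = k + (k + r - 1) / r - 1) :
    ∃ B ⊆ C, B.card = k ∧ ∀ j : Fin g, ∃ u : Fin (r+1), (j, u) ∉ B := by
  classical
  obtain ⟨hs1, h1, h2⟩ := nat_ceil_facts hk hr
  set s := (k + r - 1) / r with hs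
  set T : Finset (Fin g) := Finset.univ.filter (fun j => ∀ u : Fin (r+1), (j, u) ∈ C) with hT
  have hTsub : T ×ˢ (Finset.univ : Finset (Fin (r+1))) ⊆ C := by
    intro p hp
    rw [Finset.mem_product] at hp
    have := (Finset.mem_filter.mp hp.1).2
    have hp2 := this p.2
    rwa [Prod.mk.eta] at hp2
  have hT1 : T.card * (r + 1) ≤ k + s - 1 := by
    have := Finset.card_le_card hTsub
    rwa [Finset.card_product, Finset.card_univ, Fintype.card_fin, hC] at this
  have hTlt : T.card < s := by
    have hcs : k + s - 1 < s * (r + 1) := by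
      have : s * (r + 1) = s * r + s := by ring
      omega
    exact lt_of_mul_lt_mul_right (lt_of_le_of_lt hT1 hcs) (Nat.zero_le (r+1))
  set X : Finset (Fin g × Fin (r+1)) := T.image (fun j => (j, Fin.last r)) with hX
  have hXsub : X ⊆ C := by
    intro p hp
    obtain ⟨j, hj, rfl⟩ := Finset.mem_image.mp hp
    exact (Finset.mem_filter.mp hj).2 _
  have hXcard : X.card = T.card :=
    Finset.card_image_of_injective _ (fun a b hab => (Prod.mk.injEq _ _ _ _).mp hab |>.1)
  have hDcard : (C \ X).card = k + s - 1 - T.card := by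
    rw [Finset.card_sdiff_of_subset hXsub, hXcard, hC]
  have hkD : k ≤ (C \ X).card := by omega
  obtain ⟨B, hBD, hBcard⟩ := Finset.exists_subset_card_eq hkD
  refine ⟨B, hBD.trans (Finset.sdiff_subset), hBcard, fun j => ?_⟩
  by_cases hjT : j ∈ T
  · refine ⟨Fin.last r, fun hmem => ?_⟩
    have : (j, Fin.last r) ∈ C \ X := hBD hmem
    exact (Finset.mem_sdiff.mp this).2 (Finset.mem_image_of_mem _ hjT)
  · rw [hT, Finset.mem_filter] at hjT
    push_neg at hjT
    obtain ⟨u, hu⟩ := hjT (Finset.mem_univ j)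
    exact ⟨u, fun hmem => hu ((hBD.trans Finset.sdiff_subset) hmem)⟩

end


/-- There exists a linear code over `F_q` with locality `r`,
length `n` with `(r+1) ∣ n`, and distance `d = n - ⌈k/r⌉ - k + 2`, provided
`q > C(n, k + ⌈k/r⌉ - 1)`.  (Here `(k+r-1)/r = ⌈k/r⌉` in ℕ.)  The code is given
by a generator matrix `G`; locality is witnessed by a partition of the `n`
coordinates into groups of size `r+1` with each column in the span of the other
`r` columns of its group; distance `d` means any `n-d+1` coordinates of the
codeword determine the message. -/
theorem stmt_13 (n k r d : ℕ) (hk : 0 < k) (hr : 0 < r) (hdvd : (r + 1) ∣ n)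
    (hd : (d : ℤ) = (n : ℤ) - ⌈(k : ℚ) / (r : ℚ)⌉ - (k : ℤ) + 2) (hd1 : 1 ≤ d)
    (F : Type*) [Field F] [Fintype F]
    (hq : n.choose (k + (k + r - 1) / r - 1) < Fintype.card F) :
    ∃ (G : Matrix (Fin k) (Fin n) F) (grp : Fin n → Fin (n / (r + 1))),
      (∀ j, (Finset.univ.filter fun i => grp i = j).card = r + 1) ∧
      (∀ i : Fin n, (fun a => G a i) ∈
        Submodule.span F ((fun j : Fin n => fun a => G a j) ''
          {j : Fin n | grp j = grp i ∧ j ≠ i})) ∧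
      (∀ A : Finset (Fin n), A.card = n - d + 1 →
        ∀ x y : Fin k → F,
          (∀ j ∈ A, Matrix.vecMul x G j = Matrix.vecMul y G j) → x = y) := by
  classical
  set s : ℕ := (k + r - 1) / r with hs
  obtain ⟨hs1, hks, hsk⟩ := nat_ceil_facts hk hr
  obtain ⟨g, hg⟩ := hdvd
  have hgdef : n / (r + 1) = g := by rw [hg]; exact Nat.mul_div_cancel_left g (Nat.succ_pos r)
  have hcard : Fintype.card (Fin g × Fin (r + 1)) = Fintype.card (Fin n) := by
    simp [hg, mul_comm]
  let e : Fin n ≃ Fin g × Fin (r + 1) := (Fintype.equivOfCardEq hcard).symm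
  set m : ℕ := k + s - 1 with hm
  have hceil : ⌈(k : ℚ) / (r : ℚ)⌉ = (s : ℤ) := ceil_eq_nat_div hk hr
  rw [hceil] at hd
  have hnd : n - d + 1 = m := by omega
  set 𝒜 : Finset (Finset (Fin g × Fin (r + 1))) :=
    (Finset.univ : Finset (Fin g × Fin (r + 1))).powersetCard m with h𝒜
  have hsel : ∀ C ∈ 𝒜, ∃ B ⊆ C, B.card = k ∧ ∀ j : Fin g, ∃ u : Fin (r+1), (j, u) ∉ B := by
    intro C hC
    have := (Finset.mem_powersetCard.mp hC).2
    exact exists_B hk hr C (by rw [this])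
  choose! sel hsub hcardB hmiss using hsel
  set P : MvPolynomial (Fin k × Fin g × Fin r) F := ∏ C ∈ 𝒜, Qd F k r g (sel C) with hP
  have hP0 : P ≠ 0 :=
    Finset.prod_ne_zero_iff.mpr (fun C hC => Qd_ne_zero (hcardB C hC) (hmiss C hC))
  have h𝒜card : 𝒜.card = n.choose m := by
    rw [h𝒜, Finset.card_powersetCard, Finset.card_univ, Fintype.card_prod,
      Fintype.card_fin, Fintype.card_fin, mul_comm, ← hg]
  have hdegP : ∀ v, P.degreeOf v < Fintype.card F := by
    intro v
    have h1 : P.degreeOf v ≤ ∑ _C ∈ 𝒜, 1 :=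
      degreeOf_prod_le' v 𝒜 _ (fun _ => 1) (fun C _ => degreeOf_Qd_le v (sel C))
    rw [Finset.sum_const, smul_eq_mul, mul_one] at h1
    exact lt_of_le_of_lt h1 (h𝒜card ▸ hq)
  obtain ⟨y, hy⟩ := mv_exists P hP0 hdegP
  have heach : ∀ C ∈ 𝒜, MvPolynomial.eval y (Qd F k r g (sel C)) ≠ 0 := by
    intro C hC hzero
    apply hy
    rw [hP, map_prod]
    exact Finset.prod_eq_zero hC hzero
  set G : Matrix (Fin k) (Fin n) F :=
    Matrix.of fun a i => MvPolynomial.eval y (pcol F k r g (e i) a) with hG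
  set grp : Fin n → Fin (n / (r + 1)) := fun i => finCongr hgdef.symm (e i).1 with hgrp
  have hfib : ∀ j' : Fin g,
      (Finset.univ.filter fun i : Fin n => (e i).1 = j')
        = Finset.univ.image (fun t : Fin (r+1) => e.symm (j', t)) := by
    intro j'
    ext i
    simp only [Finset.mem_filter, Finset.mem_univ, true_and, Finset.mem_image]
    constructor
    · intro h
      exact ⟨(e i).2, by rw [← h, Prod.mk.eta, Equiv.symm_apply_apply]⟩
    · rintro ⟨t, rfl⟩
      rw [Equiv.apply_symm_apply]
  have hinj : ∀ j' : Fin g, Function.Injective (fun t : Fin (r+1) => e.symm (j', t)) := by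
    intro j' a b hab
    have := e.symm.injective hab
    exact ((Prod.mk.injEq _ _ _ _).mp this).2
  refine ⟨G, grp, ?_, ?_, ?_⟩
  · intro j
    have : (Finset.univ.filter fun i => grp i = j)
        = Finset.univ.filter fun i : Fin n => (e i).1 = finCongr hgdef j := by
      ext i
      simp only [Finset.mem_filter, Finset.mem_univ, true_and, hgrp]
      exact ⟨fun h => by rw [← h]; rfl, fun h => by simp [h]⟩
    rw [this, hfib, Finset.card_image_of_injective _ (hinj _), Finset.card_univ,
      Fintype.card_fin]
  · intro i
    set j' : Fin g := (e i).1 with hj'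
    set others : Finset (Fin n) := Finset.univ.filter fun i' => grp i' = grp i ∧ i' ≠ i
      with hoth
    have hgrpeq : ∀ i' : Fin n, grp i' = grp i ↔ (e i').1 = j' := by
      intro i'
      simp only [hgrp, hj']
      exact ⟨fun h => by simpa using congrArg (finCongr hgdef) h, fun h => by simp [h]⟩
    have hgroup_sum : ∑ i' ∈ Finset.univ.filter (fun i' : Fin n => (e i').1 = j'),
        (fun a => G a i') = (0 : Fin k → F) := by
      rw [hfib, Finset.sum_image (fun a _ b _ hab => hinj j' hab)]
      funext a
      rw [Finset.sum_apply]
      have : ∀ t : Fin (r+1), G a (e.symm (j', t))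
          = MvPolynomial.eval y (pcol F k r g (j', t) a) := by
        intro t
        rw [hG, Matrix.of_apply, Equiv.apply_symm_apply]
      rw [Finset.sum_congr rfl (fun t _ => this t), ← map_sum, pcol_sum, map_zero]
      rfl
    have hsplit : Finset.univ.filter (fun i' : Fin n => (e i').1 = j')
        = insert i others := by
      ext i'
      simp only [Finset.mem_filter, Finset.mem_univ, true_and, Finset.mem_insert, hoth,
        hgrpeq]
      constructor
      · intro h
        by_cases hii : i' = i
        · exact Or.inl hii
        · exact Or.inr ⟨h, hii⟩
      · rintro (rfl | ⟨h, _⟩)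
        · rfl
        · exact h
    have hinot : i ∉ others := by simp [hoth]
    have hsum2 : (fun a => G a i) + ∑ i' ∈ others, (fun a => G a i') = 0 := by
      have h := hgroup_sum
      rw [hsplit, Finset.sum_insert hinot] at h
      exact h
    have hmem : ∀ i' ∈ others, (fun a => G a i') ∈
        Submodule.span F ((fun j : Fin n => fun a => G a j) ''
          {j : Fin n | grp j = grp i ∧ j ≠ i}) := by
      intro i' hi'
      rw [hoth, Finset.mem_filter] at hi'
      exact Submodule.subset_span ⟨i', hi'.2, rfl⟩
    have : (fun a => G a i) = -∑ i' ∈ others, (fun a => G a i') := by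
      rw [eq_neg_iff_add_eq_zero]
      exact hsum2
    rw [this]
    exact Submodule.neg_mem _ (Submodule.sum_mem _ hmem)
  · intro A hA x x' hagree
    rw [hnd] at hA
    set Ab : Finset (Fin g × Fin (r+1)) := A.image e with hAb
    have hAbcard : Ab.card = m := by
      rw [hAb, Finset.card_image_of_injective _ e.injective, hA]
    have hAb𝒜 : Ab ∈ 𝒜 := Finset.mem_powersetCard.mpr ⟨Finset.subset_univ _, hAbcard⟩
    set B : Finset (Fin g × Fin (r+1)) := sel Ab with hB
    have hBk : B.card = k := hcardB Ab hAb𝒜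
    set ε : B ≃ Fin k := B.equivFin.trans (finCongr hBk) with hε
    set N : Matrix (Fin k) (Fin k) F := Matrix.of fun a c =>
      MvPolynomial.eval y (pcol F k r g ((ε.symm c : B) : Fin g × Fin (r+1)) a) with hN
    have hdet : N.det ≠ 0 := by
      have h1 := heach Ab hAb𝒜
      rw [Qd, dif_pos hBk] at h1
      rw [RingHom.map_det, RingHom.mapMatrix_apply] at h1
      convert h1 using 2
      ext a c; rfl
    have hz : Matrix.vecMul (x - x') N = 0 := by
      funext c
      have hmemA : e.symm ((ε.symm c : B) : Fin g × Fin (r+1)) ∈ A := by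
        have hBmem : ((ε.symm c : B) : Fin g × Fin (r+1)) ∈ Ab := hsub Ab hAb𝒜 (ε.symm c).2
        obtain ⟨i, hiA, hie⟩ := Finset.mem_image.mp hBmem
        rw [← hie, Equiv.symm_apply_apply]
        exact hiA
      have hcol : ∀ a, N a c = G a (e.symm ((ε.symm c : B) : Fin g × Fin (r+1))) := by
        intro a
        rw [hG, hN, Matrix.of_apply, Matrix.of_apply, Equiv.apply_symm_apply]
      have h0 : Matrix.vecMul (x - x') G (e.symm ((ε.symm c : B) : Fin g × Fin (r+1))) = 0 := by
        rw [Matrix.sub_vecMul]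
        have := hagree _ hmemA
        rw [Pi.sub_apply, this, sub_self]
      rw [Pi.zero_apply, ← h0]
      simp only [Matrix.vecMul, dotProduct]
      exact Finset.sum_congr rfl (fun a _ => by rw [hcol a])
    have hzero : x - x' = 0 := by
      have hunit : IsUnit N.det := isUnit_iff_ne_zero.mpr hdet
      calc x - x' = Matrix.vecMul (x - x') 1 := (Matrix.vecMul_one _).symm
        _ = Matrix.vecMul (x - x') (N * N⁻¹) := by rw [Matrix.mul_nonsing_inv N hunit]
        _ = Matrix.vecMul (Matrix.vecMul (x - x') N) N⁻¹ := (Matrix.vecMul_vecMul _ _ _).symm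
        _ = Matrix.vecMul 0 N⁻¹ := by rw [hz]
        _ = 0 := Matrix.zero_vecMul _
    exact sub_eq_zero.mp hzero
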